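/- Let w(x) = ⟨x²,x⟩/|x| for the algebra V(u) of a cubic form u on ℝⁿ. Then the Laplacian of w at x ≠ 0 is Δw(x) = (6/|x|)trace L_x − (n+3)⟨x²,x⟩/|x|³. In particular, if trace L_x = 0 for all x, then Δw(x) = −(n+3)w(x)/|x|². -/

import Mathlib

open RealInnerProductSpace


variable {n : ℕ}
local notation "E" => EuclideanSpace ℝ (Fin n)

lemma sqrt_sum_eq_norm (y : EuclideanSpace ℝ (Fin n)) : Real.sqrt (∑ i, y i * y i) = ‖y‖ := by
  rw [EuclideanSpace.norm_eq]
  congr 1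
  refine Finset.sum_congr rfl fun i _ => ?_
  rw [Real.norm_eq_abs, sq_abs, sq]

lemma hnormD (y : E) (hy : y ≠ 0) :
    HasFDerivAt (fun z : E => ‖z‖) (‖y‖⁻¹ • innerSL ℝ y) y := by
  have h1 := (hasFDerivAt_id (𝕜 := ℝ) y).inner ℝ (hasFDerivAt_id y)
  have h2 := h1.sqrt (by simpa using (inner_self_ne_zero (𝕜 := ℝ)).2 hy)
  have h3 : (fun z : E => Real.sqrt (inner (𝕜 := ℝ) (id z) (id z))) = fun z : E => ‖z‖ := by
    funext z
    rw [id, real_inner_self_eq_norm_sq, Real.sqrt_sq (norm_nonneg z)]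
  rw [h3] at h2
  refine h2.congr_fderiv ?_
  ext v
  simp [real_inner_comm y v, PiLp.inner_apply, RCLike.inner_apply, sqrt_sum_eq_norm]
  ring

noncomputable def toCLM (mul : E →ₗ[ℝ] E →ₗ[ℝ] E) : E →L[ℝ] E →L[ℝ] E :=
  LinearMap.toContinuousLinearMap
  { toFun := fun a => LinearMap.toContinuousLinearMap (mul a)
    map_add' := fun a b => by ext v; simp
    map_smul' := fun c a => by ext v; simp }

@[simp] lemma toCLM_apply (mul : E →ₗ[ℝ] E →ₗ[ℝ] E) (a b : E) :
    toCLM mul a b = mul a b := rfl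

lemma sqD (mul : E →ₗ[ℝ] E →ₗ[ℝ] E) (y : E) :
    HasFDerivAt (fun z : E => toCLM mul z z)
      ((toCLM mul).precompR (EuclideanSpace ℝ (Fin n)) y (ContinuousLinearMap.id ℝ _) +
       (toCLM mul).precompL (EuclideanSpace ℝ (Fin n)) (ContinuousLinearMap.id ℝ _) y) y :=
  (toCLM mul).hasFDerivAt_of_bilinear (hasFDerivAt_id y) (hasFDerivAt_id y)

lemma cubicD (mul : E →ₗ[ℝ] E →ₗ[ℝ] E)
    (hcomm : ∀ x y, mul x y = mul y x)
    (hassoc : ∀ x y z, ⟪mul x y, z⟫ = ⟪x, mul y z⟫) (y : E) :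
    HasFDerivAt (fun z : E => ⟪mul z z, z⟫) ((3:ℝ) • innerSL ℝ (mul y y)) y := by
  have h1 : (fun z : E => ⟪mul z z, z⟫) = fun z : E => ⟪toCLM mul z z, id z⟫ := by
    funext z; simp
  rw [h1]
  have h2 := (sqD mul y).inner ℝ (hasFDerivAt_id y)
  refine h2.congr_fderiv ?_
  ext v
  have e1 : ⟪mul v y, y⟫ = ⟪mul y y, v⟫ := by
    rw [hassoc, real_inner_comm]
  have e2 : ⟪mul y v, y⟫ = ⟪mul y y, v⟫ := by rw [hcomm y v, e1]
  simp [ContinuousLinearMap.precompR, ContinuousLinearMap.precompL, inner_add_left, e1, e2,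
    real_inner_comm v (mul y y)]
  have hs : ∑ i, v i * (mul y) y i = ∑ i, (mul y) y i * v i :=
    Finset.sum_congr rfl fun i _ => mul_comm _ _
  ring

lemma wD (mul : E →ₗ[ℝ] E →ₗ[ℝ] E)
    (hcomm : ∀ x y, mul x y = mul y x)
    (hassoc : ∀ x y z, ⟪mul x y, z⟫ = ⟪x, mul y z⟫)
    (w : E → ℝ) (hw : ∀ x : E, w x = ⟪mul x x, x⟫ / ‖x‖)
    (y : E) (hy : y ≠ 0) :
    HasFDerivAt w
      ((3 / ‖y‖) • innerSL ℝ (mul y y) - (⟪mul y y, y⟫ / ‖y‖ ^ 3) • innerSL ℝ y) y := by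
  have hfun : w = fun z : E => ⟪mul z z, z⟫ * ‖z‖⁻¹ := by
    funext z; rw [hw z, div_eq_mul_inv]
  have hinv : HasFDerivAt (fun z : E => ‖z‖⁻¹)
      ((-(‖y‖ ^ 2)⁻¹) • (‖y‖⁻¹ • innerSL ℝ y)) y :=
    (hasDerivAt_inv (norm_ne_zero_iff.2 hy)).comp_hasFDerivAt y (hnormD y hy)
  have hmain := (cubicD mul hcomm hassoc y).mul hinv
  rw [hfun]
  refine hmain.congr_fderiv ?_
  ext v
  have hny : ‖y‖ ≠ 0 := norm_ne_zero_iff.2 hy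
  simp [inner_smul_left]
  field_simp
  ring

lemma secondD (mul : E →ₗ[ℝ] E →ₗ[ℝ] E)
    (hcomm : ∀ x y, mul x y = mul y x)
    (hassoc : ∀ x y z, ⟪mul x y, z⟫ = ⟪x, mul y z⟫)
    (v x : E) (hx : x ≠ 0) :
    fderiv ℝ (fun y : E => 3 * ‖y‖⁻¹ * ⟪mul y y, v⟫ -
        ⟪mul y y, y⟫ * (‖y‖⁻¹ * ‖y‖⁻¹ * ‖y‖⁻¹) * ⟪y, v⟫) x v =
      6 * ⟪mul x v, v⟫ / ‖x‖ - 6 * ⟪mul x x, v⟫ * ⟪x, v⟫ / ‖x‖ ^ 3 -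
        ⟪mul x x, x⟫ * ⟪v, v⟫ / ‖x‖ ^ 3 + 3 * ⟪mul x x, x⟫ * ⟪x, v⟫ ^ 2 / ‖x‖ ^ 5 := by
  have hnx : ‖x‖ ≠ 0 := norm_ne_zero_iff.2 hx
  have hinv : HasFDerivAt (fun z : E => ‖z‖⁻¹) ((-(‖x‖ ^ 2)⁻¹) • (‖x‖⁻¹ • innerSL ℝ x)) x :=
    (hasDerivAt_inv hnx).comp_hasFDerivAt x (hnormD x hx)
  have hquadv := (sqD mul x).inner ℝ (hasFDerivAt_const v x)
  have hcub := cubicD mul hcomm hassoc x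
  have hlinv := (hasFDerivAt_id x).inner ℝ (hasFDerivAt_const v x)
  have hA := (hinv.const_mul (3:ℝ)).mul hquadv
  have hB := (hcub.mul ((hinv.mul hinv).mul hinv)).mul hlinv
  have htot := hA.sub hB
  rw [show fderiv ℝ (fun y : E => 3 * ‖y‖⁻¹ * ⟪mul y y, v⟫ -
        ⟪mul y y, y⟫ * (‖y‖⁻¹ * ‖y‖⁻¹ * ‖y‖⁻¹) * ⟪y, v⟫) x = _ from htot.fderiv]
  simp only [ContinuousLinearMap.sub_apply, ContinuousLinearMap.add_apply,
    ContinuousLinearMap.smul_apply, ContinuousLinearMap.comp_apply,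
    ContinuousLinearMap.prod_apply, fderivInnerCLM_apply, innerSL_apply_apply, smul_eq_mul,
    ContinuousLinearMap.coe_id', id_eq, toCLM_apply, ContinuousLinearMap.precompR,
    ContinuousLinearMap.precompL, ContinuousLinearMap.id_apply, neg_mul, neg_neg,
    ContinuousLinearMap.zero_apply, inner_zero_right, add_zero, zero_add, mul_zero, zero_mul]
  simp only [ContinuousLinearMap.compL_apply, ContinuousLinearMap.flip_apply,
    ContinuousLinearMap.comp_apply, ContinuousLinearMap.id_apply, toCLM_apply,
    inner_add_left, hcomm v x, Pi.mul_apply, Pi.pow_apply]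
  field_simp
  ring

lemma trace_eq (f : E →ₗ[ℝ] E) :
    LinearMap.trace ℝ _ f = ∑ i, ⟪f (EuclideanSpace.single i 1), EuclideanSpace.single i 1⟫ := by
  rw [LinearMap.trace_eq_matrix_trace ℝ (EuclideanSpace.basisFun (Fin n) ℝ).toBasis f,
    Matrix.trace]
  refine Finset.sum_congr rfl fun i _ => ?_
  rw [Matrix.diag_apply, LinearMap.toMatrix_apply, OrthonormalBasis.coe_toBasis,
    OrthonormalBasis.coe_toBasis_repr_apply, EuclideanSpace.basisFun_repr,
    EuclideanSpace.basisFun_apply, EuclideanSpace.inner_single_right]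
  simp

/-- For `w(x) = ⟪x², x⟫ / ‖x‖` on `ℝⁿ`, the Laplacian satisfies
`Δw(x) = (6/‖x‖) trace L_x − (n+3) ⟪x², x⟫ / ‖x‖³` for `x ≠ 0`; in particular if
`trace L_x = 0` for all `x`, then `Δw(x) = −(n+3) w(x) / ‖x‖²`. -/
theorem stmt_18 {n : ℕ}
    (mul : EuclideanSpace ℝ (Fin n) →ₗ[ℝ] EuclideanSpace ℝ (Fin n) →ₗ[ℝ]
      EuclideanSpace ℝ (Fin n))
    (hcomm : ∀ x y, mul x y = mul y x)
    (hassoc : ∀ x y z, ⟪mul x y, z⟫ = ⟪x, mul y z⟫)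
    (w : EuclideanSpace ℝ (Fin n) → ℝ)
    (hw : ∀ x, w x = ⟪mul x x, x⟫ / ‖x‖)
    (x : EuclideanSpace ℝ (Fin n)) (hx : x ≠ 0) :
    (∑ i : Fin n, fderiv ℝ (fun y => fderiv ℝ w y (EuclideanSpace.single i 1)) x
        (EuclideanSpace.single i 1) =
      6 / ‖x‖ * LinearMap.trace ℝ _ (mul x) - (n + 3) * ⟪mul x x, x⟫ / ‖x‖ ^ 3) ∧
      ((∀ y, LinearMap.trace ℝ _ (mul y) = 0) →
        ∑ i : Fin n, fderiv ℝ (fun y => fderiv ℝ w y (EuclideanSpace.single i 1)) x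
            (EuclideanSpace.single i 1) = -(n + 3) * w x / ‖x‖ ^ 2) := by
  have hnx : ‖x‖ ≠ 0 := norm_ne_zero_iff.2 hx
  have hlapl : ∀ v : EuclideanSpace ℝ (Fin n),
      fderiv ℝ (fun y => fderiv ℝ w y v) x v =
        6 * ⟪mul x v, v⟫ / ‖x‖ - 6 * ⟪mul x x, v⟫ * ⟪x, v⟫ / ‖x‖ ^ 3 -
          ⟪mul x x, x⟫ * ⟪v, v⟫ / ‖x‖ ^ 3 + 3 * ⟪mul x x, x⟫ * ⟪x, v⟫ ^ 2 / ‖x‖ ^ 5 := by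
    intro v
    have hev : (fun y => fderiv ℝ w y v) =ᶠ[nhds x]
        (fun y : EuclideanSpace ℝ (Fin n) => 3 * ‖y‖⁻¹ * ⟪mul y y, v⟫ -
          ⟪mul y y, y⟫ * (‖y‖⁻¹ * ‖y‖⁻¹ * ‖y‖⁻¹) * ⟪y, v⟫) := by
      filter_upwards [eventually_ne_nhds hx] with y hy
      rw [(wD mul hcomm hassoc w hw y hy).fderiv]
      have hny : ‖y‖ ≠ 0 := norm_ne_zero_iff.2 hy
      simp only [ContinuousLinearMap.sub_apply, ContinuousLinearMap.smul_apply,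
        innerSL_apply_apply, smul_eq_mul]
      field_simp
    rw [hev.fderiv_eq]
    exact secondD mul hcomm hassoc v x hx
  have hsingle : ∀ (a : EuclideanSpace ℝ (Fin n)) (i : Fin n), ⟪a, EuclideanSpace.single i 1⟫ = a i := fun a i => by
    rw [EuclideanSpace.inner_single_right]; simp
  have S_bc : ∑ i : Fin n, ⟪mul x x, EuclideanSpace.single i 1⟫ * ⟪x, EuclideanSpace.single i 1⟫ = ⟪mul x x, x⟫ := by
    simp only [hsingle, PiLp.inner_apply, RCLike.inner_apply, conj_trivial]
    exact Finset.sum_congr rfl fun i _ => mul_comm _ _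
  have S_n : ∑ i : Fin n, ⟪(EuclideanSpace.single i 1 : EuclideanSpace ℝ (Fin n)), EuclideanSpace.single i 1⟫ = (n : ℝ) := by
    simp [hsingle, EuclideanSpace.single_apply]
  have S_r2 : ∑ i : Fin n, ⟪x, EuclideanSpace.single i 1⟫ ^ 2 = ‖x‖ ^ 2 := by
    rw [← real_inner_self_eq_norm_sq]
    simp only [hsingle, PiLp.inner_apply, RCLike.inner_apply, conj_trivial, sq]
  have S_tr : ∑ i : Fin n, ⟪mul x (EuclideanSpace.single i 1), EuclideanSpace.single i 1⟫ = LinearMap.trace ℝ _ (mul x) := (trace_eq (mul x)).symm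
  have main : ∑ i : Fin n, fderiv ℝ (fun y => fderiv ℝ w y (EuclideanSpace.single i 1)) x
        (EuclideanSpace.single i 1) =
      6 / ‖x‖ * LinearMap.trace ℝ _ (mul x) - (n + 3) * ⟪mul x x, x⟫ / ‖x‖ ^ 3 := by
    rw [Finset.sum_congr rfl fun i _ => hlapl (EuclideanSpace.single i 1)]
    rw [Finset.sum_congr rfl (fun (i : Fin n) _ => show
      6 * ⟪mul x (EuclideanSpace.single i 1), EuclideanSpace.single i 1⟫ / ‖x‖ - 6 * ⟪mul x x, EuclideanSpace.single i 1⟫ * ⟪x, EuclideanSpace.single i 1⟫ / ‖x‖ ^ 3 - ⟪mul x x, x⟫ * ⟪(EuclideanSpace.single i 1 : EuclideanSpace ℝ (Fin n)), EuclideanSpace.single i 1⟫ / ‖x‖ ^ 3 + 3 * ⟪mul x x, x⟫ * ⟪x, EuclideanSpace.single i 1⟫ ^ 2 / ‖x‖ ^ 5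
      = (6 / ‖x‖) * ⟪mul x (EuclideanSpace.single i 1), EuclideanSpace.single i 1⟫ - (6 / ‖x‖ ^ 3) * (⟪mul x x, EuclideanSpace.single i 1⟫ * ⟪x, EuclideanSpace.single i 1⟫) - (⟪mul x x, x⟫ / ‖x‖ ^ 3) * ⟪(EuclideanSpace.single i 1 : EuclideanSpace ℝ (Fin n)), EuclideanSpace.single i 1⟫ + (3 * ⟪mul x x, x⟫ / ‖x‖ ^ 5) * ⟪x, EuclideanSpace.single i 1⟫ ^ 2 from by ring)]
    rw [Finset.sum_add_distrib, Finset.sum_sub_distrib, Finset.sum_sub_distrib,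
      ← Finset.mul_sum, ← Finset.mul_sum, ← Finset.mul_sum, ← Finset.mul_sum,
      S_tr, S_bc, S_n, S_r2]
    field_simp
    ring
  refine ⟨main, fun htr => ?_⟩
  rw [main, htr x, hw x]
  field_simp
  ring
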